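/- Let 𝒦 = {K₁, …, K_M} be a finite set of row-stochastic N×N real matrices, each with strictly positive diagonal entries, and let p₁, …, p_M be strictly positive reals summing to 1. Then the matrix Σᵢ pᵢKᵢ is primitive if and only if the N²×N² matrix Σᵢ pᵢ (Kᵢ ⊗ Kᵢ) is primitive. -/

import Mathlib

open Matrix Kronecker Finset

/-- A square real matrix is row-stochastic if it has nonnegative entries and
each of its rows sums to 1. -/
def RowStochastic {N : ℕ} (K : Matrix (Fin N) (Fin N) ℝ) : Prop :=
  (∀ i j, 0 ≤ K i j) ∧ ∀ i, ∑ j, K i j = 1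

/-- A nonnegative square matrix `T` is primitive if `T ^ m` has all entries
strictly positive for some integer `m ≥ 1`. -/
def IsPrimitive {n : Type*} [Fintype n] [DecidableEq n] (T : Matrix n n ℝ) : Prop :=
  ∃ m : ℕ, 1 ≤ m ∧ ∀ i j, 0 < (T ^ m) i j

section Aux

variable {n : Type*} [Fintype n] [DecidableEq n] {M : ℕ}

/-- The product of a word of matrices. -/
noncomputable def prodM (C : Fin M → Matrix n n ℝ) (w : List (Fin M)) : Matrix n n ℝ :=
  (w.map C).prod

@[simp] lemma prodM_nil (C : Fin M → Matrix n n ℝ) : prodM C [] = 1 := rfl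

@[simp] lemma prodM_cons (C : Fin M → Matrix n n ℝ) (k : Fin M) (w : List (Fin M)) :
    prodM C (k :: w) = C k * prodM C w := by
  simp [prodM]

lemma prodM_append (C : Fin M → Matrix n n ℝ) (u v : List (Fin M)) :
    prodM C (u ++ v) = prodM C u * prodM C v := by
  simp [prodM]

lemma mul_entry_nonneg {P Q : Matrix n n ℝ} (hP : ∀ i j, 0 ≤ P i j)
    (hQ : ∀ i j, 0 ≤ Q i j) : ∀ i j, 0 ≤ (P * Q) i j := by
  intro i j
  rw [Matrix.mul_apply]
  exact Finset.sum_nonneg fun x _ => mul_nonneg (hP i x) (hQ x j)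

lemma mul_entry_le {P Q : Matrix n n ℝ} (hP : ∀ i j, 0 ≤ P i j)
    (hQ : ∀ i j, 0 ≤ Q i j) (i j x : n) : P i x * Q x j ≤ (P * Q) i j := by
  rw [Matrix.mul_apply]
  exact Finset.single_le_sum (f := fun y => P i y * Q y j)
    (fun y _ => mul_nonneg (hP i y) (hQ y j)) (Finset.mem_univ x)

lemma mul_entry_pos {P Q : Matrix n n ℝ} (hP : ∀ i j, 0 ≤ P i j)
    (hQ : ∀ i j, 0 ≤ Q i j) {i j x : n} (h1 : 0 < P i x) (h2 : 0 < Q x j) :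
    0 < (P * Q) i j :=
  lt_of_lt_of_le (mul_pos h1 h2) (mul_entry_le hP hQ i j x)

lemma prodM_nonneg {C : Fin M → Matrix n n ℝ} (hC : ∀ k i j, 0 ≤ C k i j) :
    ∀ (w : List (Fin M)) (i j : n), 0 ≤ prodM C w i j := by
  intro w
  induction w with
  | nil => intro i j; simp [Matrix.one_apply]; positivity
  | cons k w ih =>
    intro i j
    rw [prodM_cons]
    exact mul_entry_nonneg (hC k) ih i j

lemma prodM_diag_pos {C : Fin M → Matrix n n ℝ} (hC : ∀ k i j, 0 ≤ C k i j)
    (hd : ∀ k i, 0 < C k i i) : ∀ (w : List (Fin M)) (i : n), 0 < prodM C w i i := by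
  intro w
  induction w with
  | nil => intro i; simp [Matrix.one_apply]
  | cons k w ih =>
    intro i
    rw [prodM_cons]
    exact mul_entry_pos (hC k) (prodM_nonneg hC w) (hd k i) (ih i)

lemma pow_entry_nonneg {X : Matrix n n ℝ} (hX : ∀ i j, 0 ≤ X i j) :
    ∀ (m : ℕ) (i j : n), 0 ≤ (X ^ m) i j := by
  intro m
  induction m with
  | zero => intro i j; simp [Matrix.one_apply]; positivity
  | succ m ih =>
    intro i j
    rw [pow_succ]
    exact mul_entry_nonneg ih hX i j

lemma avg_nonneg {C : Fin M → Matrix n n ℝ} (hC : ∀ k i j, 0 ≤ C k i j)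
    {p : Fin M → ℝ} (hp : ∀ k, 0 < p k) :
    ∀ i j, 0 ≤ (∑ k, p k • C k) i j := by
  intro i j
  simp only [Matrix.sum_apply, Matrix.smul_apply, smul_eq_mul]
  exact Finset.sum_nonneg fun k _ => mul_nonneg (hp k).le (hC k i j)

lemma pos_of_sum_pos {α : Type*} [Fintype α] {f : α → ℝ} (h : 0 < ∑ x, f x) :
    ∃ x, 0 < f x := by
  by_contra hcon
  push_neg at hcon
  exact absurd (Finset.sum_nonpos fun x _ => hcon x) (not_le.mpr h)

lemma pos_pos_of_mul_pos {a b : ℝ} (ha : 0 ≤ a) (hb : 0 ≤ b) (h : 0 < a * b) :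
    0 < a ∧ 0 < b := by
  constructor
  · rcases ha.lt_or_eq with h' | h'
    · exact h'
    · exfalso; rw [← h'] at h; simp at h
  · rcases hb.lt_or_eq with h' | h'
    · exact h'
    · exfalso; rw [← h'] at h; simp at h

/-- Word extraction: a positive entry of a power of the average yields a word
whose product has that entry positive. -/
lemma extract_word {C : Fin M → Matrix n n ℝ} (hC : ∀ k i j, 0 ≤ C k i j)
    {p : Fin M → ℝ} (hp : ∀ k, 0 < p k) :
    ∀ (m : ℕ) (a b : n), 0 < ((∑ k, p k • C k) ^ m) a b →
      ∃ w : List (Fin M), w.length = m ∧ 0 < prodM C w a b := by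
  intro m
  induction m with
  | zero =>
    intro a b h
    refine ⟨[], rfl, ?_⟩
    simpa using h
  | succ m ih =>
    intro a b h
    rw [pow_succ, Matrix.mul_apply] at h
    obtain ⟨x, hx⟩ := pos_of_sum_pos h
    have hXm := pow_entry_nonneg (avg_nonneg hC hp) m
    have hX := avg_nonneg hC hp
    obtain ⟨h1, h2⟩ := pos_pos_of_mul_pos (hXm a x) (hX x b) hx
    obtain ⟨w, hwl, hwp⟩ := ih a x h1
    simp only [Matrix.sum_apply, Matrix.smul_apply, smul_eq_mul] at h2
    obtain ⟨k, hk⟩ := pos_of_sum_pos h2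
    have hCk : 0 < C k x b := (pos_pos_of_mul_pos (hp k).le (hC k x b) hk).2
    refine ⟨w ++ [k], by simp [hwl], ?_⟩
    rw [prodM_append]
    refine mul_entry_pos (prodM_nonneg hC w) ?_ hwp ?_
    · intro i j
      simpa using hC k i j
    · simpa using hCk

/-- Lower bound: a positive entry in a word product yields a positive entry in
the corresponding power of the average. -/
lemma word_lower {C : Fin M → Matrix n n ℝ} (hC : ∀ k i j, 0 ≤ C k i j)
    {p : Fin M → ℝ} (hp : ∀ k, 0 < p k) :
    ∀ (w : List (Fin M)) (a b : n), 0 < prodM C w a b →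
      0 < ((∑ k, p k • C k) ^ w.length) a b := by
  intro w
  induction w with
  | nil =>
    intro a b h
    simpa using h
  | cons k w ih =>
    intro a b h
    rw [prodM_cons, Matrix.mul_apply] at h
    obtain ⟨x, hx⟩ := pos_of_sum_pos h
    obtain ⟨h1, h2⟩ := pos_pos_of_mul_pos (hC k a x) (prodM_nonneg hC w x b) hx
    have hX := avg_nonneg hC hp
    have hXax : 0 < (∑ l, p l • C l) a x := by
      have hle : p k * C k a x ≤ ∑ l, p l * C l a x :=
        Finset.single_le_sum (f := fun l => p l * C l a x)
          (fun l _ => mul_nonneg (hp l).le (hC l a x)) (Finset.mem_univ k)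
      have : 0 < ∑ l, p l * C l a x := lt_of_lt_of_le (mul_pos (hp k) h1) hle
      simpa [Matrix.sum_apply, Matrix.smul_apply, smul_eq_mul] using this
    have := ih x b h2
    rw [List.length_cons, pow_succ']
    exact mul_entry_pos hX (pow_entry_nonneg hX w.length) hXax this

lemma prodM_kronecker {C : Fin M → Matrix n n ℝ} :
    ∀ w : List (Fin M),
      prodM (fun k => C k ⊗ₖ C k) w = prodM C w ⊗ₖ prodM C w := by
  intro w
  induction w with
  | nil => simp [Matrix.one_kronecker_one]
  | cons k w ih =>
    rw [prodM_cons, prodM_cons, ih, Matrix.mul_kronecker_mul]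

end Aux

theorem stmt0 {N M : ℕ} (hN : 1 ≤ N) (hM : 1 ≤ M)
    (K : Fin M → Matrix (Fin N) (Fin N) ℝ)
    (hK : ∀ k, RowStochastic (K k))
    (hdiag : ∀ k i, 0 < K k i i)
    (p : Fin M → ℝ) (hp : ∀ k, 0 < p k) (hpsum : ∑ k, p k = 1) :
    _root_.IsPrimitive (∑ k, p k • K k) ↔ _root_.IsPrimitive (∑ k, p k • (K k ⊗ₖ K k)) := by
  have hKnn : ∀ k i j, 0 ≤ K k i j := fun k => (hK k).1
  have hCnn : ∀ (k : Fin M) (a b : Fin N × Fin N), 0 ≤ (K k ⊗ₖ K k) a b := by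
    intro k a b
    simp only [Matrix.kroneckerMap_apply]
    exact mul_nonneg (hKnn k _ _) (hKnn k _ _)
  constructor
  · rintro ⟨m, hm, hpos⟩
    refine ⟨2 * m, by omega, ?_⟩
    rintro ⟨i, i'⟩ ⟨j, j'⟩
    -- extract words for (i,j) and (i',j')
    obtain ⟨u, hul, hup⟩ := extract_word hKnn hp m i j (hpos i j)
    obtain ⟨v, hvl, hvp⟩ := extract_word hKnn hp m i' j' (hpos i' j')
    -- the concatenated word works for both pairs
    have h1 : 0 < prodM K (u ++ v) i j := by
      rw [prodM_append]
      exact mul_entry_pos (prodM_nonneg hKnn u) (prodM_nonneg hKnn v) hup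
        (prodM_diag_pos hKnn hdiag v j)
    have h2 : 0 < prodM K (u ++ v) i' j' := by
      rw [prodM_append]
      exact mul_entry_pos (prodM_nonneg hKnn u) (prodM_nonneg hKnn v)
        (prodM_diag_pos hKnn hdiag u i') hvp
    have hkron : 0 < prodM (fun k => K k ⊗ₖ K k) (u ++ v) (i, i') (j, j') := by
      rw [prodM_kronecker]
      simp only [Matrix.kroneckerMap_apply]
      exact mul_pos h1 h2
    have := word_lower hCnn hp (u ++ v) (i, i') (j, j') hkron
    have hlen : (u ++ v).length = 2 * m := by
      simp [hul, hvl]; omega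
    rwa [hlen] at this
  · rintro ⟨m, hm, hpos⟩
    refine ⟨m, hm, ?_⟩
    intro i j
    obtain ⟨w, hwl, hwp⟩ := extract_word hCnn hp m (i, i) (j, j) (hpos (i, i) (j, j))
    rw [prodM_kronecker] at hwp
    simp only [Matrix.kroneckerMap_apply] at hwp
    have h1 : 0 < prodM K w i j :=
      (pos_pos_of_mul_pos (prodM_nonneg hKnn w i j) (prodM_nonneg hKnn w i j) hwp).1
    have := word_lower hKnn hp w i j h1
    rwa [hwl] at this
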